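/- Let n, p ∈ ℕ, X̃ ∈ ℝ^{n×p}, Ỹ ∈ ℝ^n, λ₁ ≥ 0, λ₂ > 0, and let β̂ ∈ ℝ^p be a global minimizer of the Elastic Net objective L(β) = Σ_{i=1}^n (Ỹ_i − Σ_{j=1}^p β_j X̃_{ij})² + λ₂ Σ_{j=1}^p β_j² + λ₁ Σ_{j=1}^p |β_j|. Fix indices k, l with β̂_k · β̂_l > 0. Then, with r̂_i = Ỹ_i − Σ_{j=1}^p β̂_j X̃_{ij}, the identity β̂_k − β̂_l = (1/λ₂) Σ_{i=1}^n (X̃_{ik} − X̃_{il}) r̂_i holds. -/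

import Mathlib

open Finset

/-- The Elastic Net objective
`L(β) = ∑ᵢ (Ỹᵢ − ∑ⱼ βⱼ X̃ᵢⱼ)² + λ₂ ∑ⱼ βⱼ² + λ₁ ∑ⱼ |βⱼ|`. -/
noncomputable def enetObj {n p : ℕ} (Xt : Fin n → Fin p → ℝ) (Yt : Fin n → ℝ)
    (lam1 lam2 : ℝ) (β : Fin p → ℝ) : ℝ :=
  ∑ i, (Yt i - ∑ j, β j * Xt i j) ^ 2 + lam2 * ∑ j, (β j) ^ 2 + lam1 * ∑ j, |β j|

/-- If `A t² + B t ≥ 0` for all small `t`, then `B = 0`. -/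
lemma quad_nonneg_zero (A B δ : ℝ) (hδ : 0 < δ)
    (h : ∀ t : ℝ, |t| ≤ δ → 0 ≤ A * t ^ 2 + B * t) : B = 0 := by
  by_contra hB
  have hBpos : 0 < |B| := abs_pos.mpr hB
  set m : ℝ := min δ (|B| / (2 * (|A| + 1))) with hm
  have hm0 : 0 < m := lt_min hδ (by positivity)
  have hmδ : m ≤ δ := min_le_left _ _
  have hmB : m ≤ |B| / (2 * (|A| + 1)) := min_le_right _ _
  set t : ℝ := -(B / |B|) * m with htdef
  have habs : |t| = m := by
    rw [htdef, abs_mul, abs_neg, abs_div, abs_abs,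
      div_self (ne_of_gt hBpos), one_mul, abs_of_pos hm0]
  have ht : |t| ≤ δ := by rw [habs]; exact hmδ
  have hq := h t ht
  have ht2 : t ^ 2 = m ^ 2 := by
    have := sq_abs t
    rw [habs] at this
    linarith [this]
  have hBt : B * t = -(|B| * m) := by
    have hab := abs_mul_abs_self B
    rw [htdef]
    field_simp
    linear_combination hab
  rw [ht2, hBt] at hq
  have hA : A ≤ |A| := le_abs_self A
  have h2 : m * (2 * (|A| + 1)) ≤ |B| :=
    (le_div_iff₀ (by positivity)).mp hmB
  nlinarith [sq_nonneg m, hm0, hBpos]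

theorem elasticNet_coeff_difference_identity {n p : ℕ}
    (Xt : Fin n → Fin p → ℝ) (Yt : Fin n → ℝ)
    (lam1 lam2 : ℝ) (hlam1 : 0 ≤ lam1) (hlam2 : 0 < lam2)
    (βh : Fin p → ℝ)
    (hmin : ∀ β, enetObj Xt Yt lam1 lam2 βh ≤ enetObj Xt Yt lam1 lam2 β)
    (k l : Fin p) (hsign : βh k * βh l > 0) :
    βh k - βh l =
      (1 / lam2) * ∑ i, (Xt i k - Xt i l) * (Yt i - ∑ j, βh j * Xt i j) := by
  by_cases hkl : k = l
  · subst hkl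
    simp
  -- sign facts
  obtain ⟨s, hs1, hsk, hsl⟩ :
      ∃ s : ℝ, (s = 1 ∨ s = -1) ∧ 0 < s * βh k ∧ 0 < s * βh l := by
    rcases mul_pos_iff.mp hsign with ⟨h1, h2⟩ | ⟨h1, h2⟩
    · exact ⟨1, Or.inl rfl, by linarith, by linarith⟩
    · exact ⟨-1, Or.inr rfl, by linarith, by linarith⟩
  have hs2 : s * s = 1 := by rcases hs1 with h | h <;> rw [h] <;> ring
  set δ : ℝ := min (s * βh k) (s * βh l) with hδdef
  have hδ : 0 < δ := lt_min hsk hsl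
  -- the perturbed point
  set βt : ℝ → Fin p → ℝ := fun t j =>
    βh j + (if j = k then t else 0) + (if j = l then -t else 0) with hβt
  set d : Fin n → ℝ := fun i => Xt i k - Xt i l with hd
  set r : Fin n → ℝ := fun i => Yt i - ∑ j, βh j * Xt i j with hr
  set A : ℝ := (∑ i, (d i) ^ 2) + 2 * lam2 with hA
  set B : ℝ := -2 * (∑ i, d i * r i) + 2 * lam2 * (βh k - βh l) with hB
  have key : ∀ t : ℝ, |t| ≤ δ →
      enetObj Xt Yt lam1 lam2 (βt t) =
        enetObj Xt Yt lam1 lam2 βh + A * t ^ 2 + B * t := by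
    intro t ht
    have habs_s : ∀ x : ℝ, 0 ≤ s * x → |x| = s * x := by
      intro x hx
      rcases hs1 with h | h
      · rw [h] at hx ⊢; rw [abs_of_nonneg (by linarith)]; ring
      · rw [h] at hx ⊢; rw [abs_of_nonpos (by linarith)]; ring
    have hst : |s * t| ≤ δ := by
      rcases hs1 with h | h <;> rw [h] <;> simpa using ht
    have habsk : |βh k + t| = |βh k| + s * t := by
      have h1 : 0 ≤ s * (βh k + t) := by
        have h2 := neg_abs_le (s * t)
        have h3 : δ ≤ s * βh k := min_le_left _ _
        nlinarith [hst]
      rw [habs_s _ h1, habs_s _ (le_of_lt hsk)]; ring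
    have habsl : |βh l + -t| = |βh l| + s * (-t) := by
      have h1 : 0 ≤ s * (βh l + -t) := by
        have h2 := le_abs_self (s * t)
        have h3 : δ ≤ s * βh l := min_le_right _ _
        nlinarith [hst]
      rw [habs_s _ h1, habs_s _ (le_of_lt hsl)]; ring
    -- sum over j of βt t j * Xt i j
    have hsum : ∀ i, ∑ j, βt t j * Xt i j =
        (∑ j, βh j * Xt i j) + t * Xt i k - t * Xt i l := by
      intro i
      simp only [hβt, add_mul, Finset.sum_add_distrib, ite_mul, zero_mul,
        Finset.sum_ite_eq', Finset.mem_univ, if_true]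
      ring
    -- residual-sum expansion
    have h1 : ∑ i, (Yt i - ∑ j, βt t j * Xt i j) ^ 2 =
        (∑ i, (r i) ^ 2) - 2 * t * (∑ i, d i * r i) + t ^ 2 * ∑ i, (d i) ^ 2 := by
      have : ∀ i, (Yt i - ∑ j, βt t j * Xt i j) ^ 2 =
          (r i) ^ 2 - 2 * t * (d i * r i) + t ^ 2 * (d i) ^ 2 := by
        intro i
        rw [hsum i]
        simp only [hr, hd]
        ring
      rw [Finset.sum_congr rfl fun i _ => this i]
      rw [Finset.sum_add_distrib, Finset.sum_sub_distrib, ← Finset.mul_sum,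
        ← Finset.mul_sum]
    -- square-sum expansion
    have h2 : ∑ j, (βt t j) ^ 2 =
        (∑ j, (βh j) ^ 2) + 2 * t * (βh k - βh l) + 2 * t ^ 2 := by
      have hpt : ∀ j, (βt t j) ^ 2 =
          (βh j) ^ 2 + (if j = k then 2 * βh j * t + t ^ 2 else 0)
            + (if j = l then -2 * βh j * t + t ^ 2 else 0) := by
        intro j
        have hlk : ¬ l = k := fun h => hkl h.symm
        simp only [hβt]
        by_cases hjk : j = k
        · subst hjk; simp [hkl]; ring
        · by_cases hjl : j = l
          · subst hjl; simp [hjk, hlk]; ring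
          · simp [hjk, hjl]
      rw [Finset.sum_congr rfl fun j _ => hpt j]
      rw [Finset.sum_add_distrib, Finset.sum_add_distrib,
        Finset.sum_ite_eq', Finset.sum_ite_eq']
      simp only [Finset.mem_univ, if_true]
      ring
    -- abs-sum is unchanged
    have h3 : ∑ j, |βt t j| = ∑ j, |βh j| := by
      have hpt : ∀ j, |βt t j| =
          |βh j| + (if j = k then s * t else 0) + (if j = l then s * (-t) else 0) := by
        intro j
        have hlk : ¬ l = k := fun h => hkl h.symm
        simp only [hβt]
        by_cases hjk : j = k
        · subst hjk
          simpa [hkl] using habsk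
        · by_cases hjl : j = l
          · subst hjl
            simpa [hjk] using habsl
          · simp [hjk, hjl]
      rw [Finset.sum_congr rfl fun j _ => hpt j]
      rw [Finset.sum_add_distrib, Finset.sum_add_distrib,
        Finset.sum_ite_eq', Finset.sum_ite_eq']
      simp only [Finset.mem_univ, if_true]
      ring
    simp only [enetObj, h1, h2, h3, hA, hB, hr]
    ring
  have hquad : ∀ t : ℝ, |t| ≤ δ → 0 ≤ A * t ^ 2 + B * t := by
    intro t ht
    have := hmin (βt t)
    rw [key t ht] at this
    linarith
  have hB0 : B = 0 := quad_nonneg_zero A B δ hδ hquad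
  rw [hB] at hB0
  have hd' : ∑ i, d i * r i = ∑ i, (Xt i k - Xt i l) * (Yt i - ∑ j, βh j * Xt i j) := by
    simp [hd, hr]
  rw [hd'] at hB0
  field_simp
  linarith
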